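/- Let n ≥ 1 and let κ ∈ L²(ℝⁿ×ℝⁿ) be a self-adjoint kernel whose integral operator is positive semidefinite. Let g : ℝⁿ → ℂ be a continuous function and suppose the function τ(x,y) = g(x)·conj(g(y))·κ(x,y) belongs to L¹(ℝⁿ×ℝⁿ). Then the integral ∬_{ℝⁿ×ℝⁿ} τ(x,y) dx dy is a nonnegative real number. -/

import Mathlib

open MeasureTheory Matrix Complex

noncomputable section

/-- The Gaussian function `θ(A,B,C)(x,y) =
  exp(−(x−y)ᵀA(x−y) − i·(x−y)ᵀB(x+y) − (x+y)ᵀC(x+y))`. -/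
def theta {n : ℕ} (A B C : Matrix (Fin n) (Fin n) ℝ) (x y : Fin n → ℝ) : ℂ :=
  Complex.exp (-((((x - y) ⬝ᵥ A.mulVec (x - y)) : ℝ) : ℂ)
    - Complex.I * ((((x - y) ⬝ᵥ B.mulVec (x + y)) : ℝ) : ℂ)
    - ((((x + y) ⬝ᵥ C.mulVec (x + y)) : ℝ) : ℂ))

/-- The integral operator of the kernel `κ` is positive semidefinite: for every
`f ∈ L²(ℝⁿ,ℂ)`, the integral `∬ κ(x,y) f(y) conj(f(x)) dy dx` is a nonnegative real. -/
def IsPosKernel {n : ℕ} (κ : (Fin n → ℝ) → (Fin n → ℝ) → ℂ) : Prop :=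
  ∀ f : (Fin n → ℝ) → ℂ, MemLp f 2 volume →
    0 ≤ (∫ x, ∫ y, κ x y * f y * (starRingEnd ℂ) (f x)).re ∧
      (∫ x, ∫ y, κ x y * f y * (starRingEnd ℂ) (f x)).im = 0

/-- Evaluation of a polynomial in `2n` variables with complex coefficients at real points. -/
def evalP {n : ℕ} (p : MvPolynomial (Fin n ⊕ Fin n) ℂ) (x y : Fin n → ℝ) : ℂ :=
  MvPolynomial.eval (Sum.elim (fun i => ((x i : ℝ) : ℂ)) (fun i => ((y i : ℝ) : ℂ))) p
theorem integral_nonneg_of_posKernel_mul_rankOne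
    {n : ℕ} (hn : 1 ≤ n) (κ : (Fin n → ℝ) → (Fin n → ℝ) → ℂ)
    (hκL2 : MemLp (fun q : (Fin n → ℝ) × (Fin n → ℝ) => κ q.1 q.2) 2 volume)
    (hκsa : ∀ᵐ q : (Fin n → ℝ) × (Fin n → ℝ), κ q.2 q.1 = (starRingEnd ℂ) (κ q.1 q.2))
    (hκpos : IsPosKernel κ)
    (g : (Fin n → ℝ) → ℂ) (hg : Continuous g)
    (hτ : Integrable
      (fun q : (Fin n → ℝ) × (Fin n → ℝ) => g q.1 * (starRingEnd ℂ) (g q.2) * κ q.1 q.2)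
      volume) :
    0 ≤ (∫ q : (Fin n → ℝ) × (Fin n → ℝ),
          g q.1 * (starRingEnd ℂ) (g q.2) * κ q.1 q.2).re ∧
      (∫ q : (Fin n → ℝ) × (Fin n → ℝ),
          g q.1 * (starRingEnd ℂ) (g q.2) * κ q.1 q.2).im = 0 := by
  classical
  set τ : (Fin n → ℝ) × (Fin n → ℝ) → ℂ :=
    fun q => g q.1 * (starRingEnd ℂ) (g q.2) * κ q.1 q.2 with hτdef
  set B : ℕ → Set (Fin n → ℝ) := fun k => Metric.closedBall 0 k with hB
  set s : ℕ → Set ((Fin n → ℝ) × (Fin n → ℝ)) := fun k => (B k) ×ˢ (B k) with hs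
  have hBm : ∀ k, MeasurableSet (B k) := fun k => measurableSet_closedBall
  have hsm : ∀ k, MeasurableSet (s k) := fun k => (hBm k).prod (hBm k)
  have hUnion : (⋃ k, s k) = Set.univ := by
    ext q
    simp only [Set.mem_iUnion, Set.mem_univ, iff_true, hs, Set.mem_prod, hB,
      Metric.mem_closedBall, dist_zero_right]
    obtain ⟨k, hk⟩ := exists_nat_ge (max ‖q.1‖ ‖q.2‖)
    exact ⟨k, (le_max_left _ _).trans hk, (le_max_right _ _).trans hk⟩
  have hmono : Monotone s := by
    intro a b hab
    have : B a ⊆ B b := Metric.closedBall_subset_closedBall (by exact_mod_cast hab)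
    exact Set.prod_mono this this
  have htend : Filter.Tendsto (fun k => ∫ q in s k, τ q) Filter.atTop (nhds (∫ q, τ q)) := by
    have := tendsto_setIntegral_of_monotone (μ := volume) (f := τ) hsm hmono
      (by rw [hUnion]; exact hτ.integrableOn)
    rwa [hUnion, setIntegral_univ] at this
  -- each set integral is a nonneg real
  have hkey : ∀ k, 0 ≤ (∫ q in s k, τ q).re ∧ (∫ q in s k, τ q).im = 0 := by
    intro k
    set f : (Fin n → ℝ) → ℂ := (B k).indicator (fun x => (starRingEnd ℂ) (g x)) with hf
    have hfmem : MemLp f 2 volume := by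
      obtain ⟨C, hC⟩ := (isCompact_closedBall (0 : Fin n → ℝ) k).exists_bound_of_continuousOn
        ((Complex.continuous_conj.comp hg).continuousOn)
      have hbdd : ∀ᵐ x : Fin n → ℝ, ‖f x‖ ≤ max C 0 := by
        refine Filter.Eventually.of_forall fun x => ?_
        by_cases hx : x ∈ B k
        · rw [hf, Set.indicator_of_mem hx]
          exact (hC x hx).trans (le_max_left _ _)
        · rw [hf, Set.indicator_of_notMem hx]
          simp
      have htop : MemLp f ⊤ volume :=
        memLp_top_of_bound ((Complex.continuous_conj.comp hg).aestronglyMeasurable.indicator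
          (hBm k)) _ hbdd
      exact htop.mono_exponent_of_measure_support_ne_top
        (fun x hx => Set.indicator_of_notMem hx _)
        (IsCompact.measure_lt_top (isCompact_closedBall _ _)).ne le_top
    have hpoint : ∀ x y : Fin n → ℝ,
        κ x y * f y * (starRingEnd ℂ) (f x) = (s k).indicator τ (x, y) := by
      intro x y
      by_cases hx : x ∈ B k <;> by_cases hy : y ∈ B k <;>
        simp only [hf, Set.indicator_of_mem, Set.indicator_of_notMem, hx, hy, hs,
          Set.indicator_apply, Set.mem_prod, hx, hy, and_true, true_and, and_false, false_and,
          if_true, if_false, map_zero, mul_zero, zero_mul, hτdef, Complex.conj_conj] <;>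
        ring
    have hint : Integrable ((s k).indicator τ) volume := hτ.indicator (hsm k)
    have hiter : (∫ x, ∫ y, κ x y * f y * (starRingEnd ℂ) (f x)) = ∫ q in s k, τ q := by
      have h1 : (∫ x, ∫ y, κ x y * f y * (starRingEnd ℂ) (f x))
          = ∫ x, ∫ y, (s k).indicator τ (x, y) := by
        congr 1; funext x; congr 1; funext y; exact hpoint x y
      have hint' : Integrable ((s k).indicator τ) (volume.prod volume) := by
        rwa [← Measure.volume_eq_prod]
      rw [h1, integral_integral (f := fun x y => (s k).indicator τ (x, y))
        (by exact hint'), ← Measure.volume_eq_prod]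
      simp only [Prod.mk.eta]
      rw [integral_indicator (hsm k)]
    have := hκpos f hfmem
    rwa [hiter] at this
  constructor
  · have : Filter.Tendsto (fun k => (∫ q in s k, τ q).re) Filter.atTop
        (nhds ((∫ q, τ q).re)) := (Complex.continuous_re.tendsto _).comp htend
    exact le_of_tendsto_of_tendsto' tendsto_const_nhds this (fun k => (hkey k).1)
  · have : Filter.Tendsto (fun k => (∫ q in s k, τ q).im) Filter.atTop
        (nhds ((∫ q, τ q).im)) := (Complex.continuous_im.tendsto _).comp htend
    have h0 : Filter.Tendsto (fun k : ℕ => (∫ q in s k, τ q).im) Filter.atTop (nhds 0) :=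
      Filter.Tendsto.congr (fun k => ((hkey k).2).symm) tendsto_const_nhds
    exact tendsto_nhds_unique this h0
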